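/- Let ε > 0, λ ∈ ℝ, Λ := λ·A + ε·I, and let C be any real 2×2 matrix. Then the integrand satisfies exp(-rΛ)·C·exp(-rΛᵀ) = e^{-2εr}·exp(-λrA)·C·exp(λrA) for all r ≥ 0, the integral J := ∫₀^∞ exp(-rΛ)·C·exp(-rΛᵀ) dr converges, and J is the unique real 2×2 matrix solving the Lyapunov equation Λ·J + J·Λᵀ = C. -/

import Mathlib

open Matrix MeasureTheory Filter

/-- The 2×2 matrix `A = [[0, 1], [-1, 0]]`. -/
noncomputable def matA : Matrix (Fin 2) (Fin 2) ℝ := !![0, 1; -1, 0]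

noncomputable def phi : ℂ →ₐ[ℝ] Matrix (Fin 2) (Fin 2) ℝ where
  toFun z := z.re • (1 : Matrix (Fin 2) (Fin 2) ℝ) + z.im • matA
  map_one' := by simp
  map_mul' z w := by
    ext i j
    fin_cases i <;> fin_cases j <;>
      simp [matA, Matrix.mul_apply, Fin.sum_univ_two, Complex.mul_re, Complex.mul_im,
        Matrix.one_apply] <;> ring
  map_zero' := by simp
  map_add' z w := by
    simp only [Complex.add_re, Complex.add_im, add_smul]
    abel
  commutes' r := by
    simp [Algebra.algebraMap_eq_smul_one]

lemma phi_apply (z : ℂ) :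
    phi z = z.re • (1 : Matrix (Fin 2) (Fin 2) ℝ) + z.im • matA := rfl

lemma phi_cont : Continuous phi := by
  show Continuous fun z : ℂ => z.re • (1 : Matrix (Fin 2) (Fin 2) ℝ) + z.im • matA
  fun_prop

lemma exp_phi (z : ℂ) : NormedSpace.exp (phi z) = phi (Complex.exp z) := by
  letI : SeminormedRing (Matrix (Fin 2) (Fin 2) ℝ) := Matrix.linftyOpSemiNormedRing
  letI : NormedRing (Matrix (Fin 2) (Fin 2) ℝ) := Matrix.linftyOpNormedRing
  letI : NormedAlgebra ℝ (Matrix (Fin 2) (Fin 2) ℝ) := Matrix.linftyOpNormedAlgebra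
  rw [Complex.exp_eq_exp_ℂ]
  exact (NormedSpace.map_exp phi.toRingHom phi_cont z).symm

lemma exp_formula (x y : ℝ) :
    NormedSpace.exp (x • (1 : Matrix (Fin 2) (Fin 2) ℝ) + y • matA) =
      (Real.exp x * Real.cos y) • (1 : Matrix (Fin 2) (Fin 2) ℝ) +
        (Real.exp x * Real.sin y) • matA := by
  have h := exp_phi ⟨x, y⟩
  have h1 : phi ⟨x, y⟩ = x • (1 : Matrix (Fin 2) (Fin 2) ℝ) + y • matA := by
    rw [phi_apply]
  have h2 : phi (Complex.exp ⟨x, y⟩) =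
      (Real.exp x * Real.cos y) • (1 : Matrix (Fin 2) (Fin 2) ℝ) +
        (Real.exp x * Real.sin y) • matA := by
    rw [phi_apply, Complex.exp_re, Complex.exp_im]
  rw [h1, h2] at h
  exact h


noncomputable def lyapF (ε lam a b d t : ℝ) : ℝ :=
  Real.exp (-(2*ε*t)) * ((Real.cos (lam*t))^2 * a + Real.cos (lam*t) * Real.sin (lam*t) * b +
    (Real.sin (lam*t))^2 * d)

lemma trig_bound (c s x y z : ℝ) (hc : |c| ≤ 1) (hs : |s| ≤ 1) :
    |c^2*x + c*s*y + s^2*z| ≤ |x| + |y| + |z| := by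
  have hcc : |c|^2 ≤ 1 := by nlinarith [abs_nonneg c]
  have hss : |s|^2 ≤ 1 := by nlinarith [abs_nonneg s]
  have hcs : |c| * |s| ≤ 1 := mul_le_one₀ hc (abs_nonneg s) hs
  have h1 : |c^2*x| ≤ |x| := by
    rw [abs_mul, abs_pow]
    calc |c|^2 * |x| ≤ 1 * |x| := mul_le_mul_of_nonneg_right hcc (abs_nonneg x)
      _ = |x| := one_mul _
  have h2 : |c*s*y| ≤ |y| := by
    rw [abs_mul, abs_mul]
    calc |c| * |s| * |y| ≤ 1 * |y| := mul_le_mul_of_nonneg_right hcs (abs_nonneg y)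
      _ = |y| := one_mul _
  have h3 : |s^2*z| ≤ |z| := by
    rw [abs_mul, abs_pow]
    calc |s|^2 * |z| ≤ 1 * |z| := mul_le_mul_of_nonneg_right hss (abs_nonneg z)
      _ = |z| := one_mul _
  calc |c^2*x + c*s*y + s^2*z| ≤ |c^2*x + c*s*y| + |s^2*z| := abs_add_le _ _
    _ ≤ |c^2*x| + |c*s*y| + |s^2*z| := by have := abs_add_le (c^2*x) (c*s*y); linarith
    _ ≤ |x| + |y| + |z| := by linarith

lemma lyapF_bound (ε lam a b d t : ℝ) :
    |lyapF ε lam a b d t| ≤ (|a| + |b| + |d|) * Real.exp (-(2*ε*t)) := by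
  rw [lyapF, abs_mul, Real.abs_exp]
  have h := trig_bound (Real.cos (lam*t)) (Real.sin (lam*t)) a b d
    (Real.abs_cos_le_one _) (Real.abs_sin_le_one _)
  rw [mul_comm]
  exact mul_le_mul_of_nonneg_right h (Real.exp_nonneg _)

lemma lyapF_cont (ε lam a b d : ℝ) : Continuous (fun t => lyapF ε lam a b d t) := by
  unfold lyapF; fun_prop

lemma lyapF_integrable {ε : ℝ} (hε : 0 < ε) (lam a b d : ℝ) :
    IntegrableOn (fun t => lyapF ε lam a b d t) (Set.Ioi (0:ℝ)) := by
  refine Integrable.mono'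
    ((exp_neg_integrableOn_Ioi 0 (show (0:ℝ) < 2*ε by positivity)).const_mul (|a|+|b|+|d|))
    ((lyapF_cont ε lam a b d).aestronglyMeasurable) ?_
  filter_upwards with t
  rw [Real.norm_eq_abs, show -(2*ε)*t = -(2*ε*t) by ring]
  exact lyapF_bound ε lam a b d t

lemma lyapF_tendsto {ε : ℝ} (hε : 0 < ε) (lam a b d : ℝ) :
    Tendsto (fun t => lyapF ε lam a b d t) atTop (nhds 0) := by
  have h1 : Tendsto (fun t : ℝ => 2*ε*t) atTop atTop :=
    Tendsto.const_mul_atTop (by positivity) tendsto_id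
  have h2 : Tendsto (fun t : ℝ => Real.exp (-(2*ε*t))) atTop (nhds 0) :=
    Real.tendsto_exp_neg_atTop_nhds_zero.comp h1
  have h3 := h2.const_mul (|a|+|b|+|d|)
  rw [mul_zero] at h3
  exact squeeze_zero_norm (fun t => by
    rw [Real.norm_eq_abs]; exact lyapF_bound ε lam a b d t) h3

lemma lyapF_hasDerivAt (ε lam a b d r : ℝ) :
    HasDerivAt (fun t => lyapF ε lam a b d t)
      (lyapF ε lam (lam*b - 2*ε*a) (2*lam*(d-a) - 2*ε*b) (-(lam*b) - 2*ε*d) r) r := by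
  have h0 : HasDerivAt (fun t : ℝ => -(2*ε*t)) (-(2*ε)) r := by
    exact ((hasDerivAt_id r).const_mul (2*ε)).neg.congr_deriv (by ring)
  have hu := h0.exp
  have hl : HasDerivAt (fun t : ℝ => lam * t) lam r := by
    simpa using (hasDerivAt_id r).const_mul lam
  have hc := hl.cos
  have hs := hl.sin
  have hP := (((hc.pow 2).mul_const a).add ((hc.mul hs).mul_const b)).add
    ((hs.pow 2).mul_const d)
  have h := hu.mul hP
  unfold lyapF
  refine h.congr_deriv ?_
  simp only [Pi.add_apply, Pi.mul_apply, Pi.pow_apply]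
  push_cast
  ring

lemma lyapF_zero (ε lam a b d : ℝ) : lyapF ε lam a b d 0 = a := by
  simp [lyapF]

lemma lyapF_integral_deriv {ε : ℝ} (hε : 0 < ε) (lam a b d : ℝ) :
    ∫ t in Set.Ioi (0:ℝ),
      lyapF ε lam (lam*b - 2*ε*a) (2*lam*(d-a) - 2*ε*b) (-(lam*b) - 2*ε*d) t = -a := by
  have h := integral_Ioi_of_hasDerivAt_of_tendsto
    (f := fun t => lyapF ε lam a b d t)
    (f' := fun t => lyapF ε lam (lam*b - 2*ε*a) (2*lam*(d-a) - 2*ε*b) (-(lam*b) - 2*ε*d) t)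
    (a := 0) (m := 0)
    ((lyapF_cont ε lam a b d).continuousWithinAt)
    (fun x _ => lyapF_hasDerivAt ε lam a b d x)
    (lyapF_integrable hε lam _ _ _)
    (lyapF_tendsto hε lam a b d)
  rw [h]
  simp [lyapF_zero]

lemma lyap_uniq {ε lam : ℝ} (hε : 0 < ε) {a b c d : ℝ}
    (h1 : 2*ε*a + lam*(b+c) = 0) (h2 : 2*ε*b + lam*(d-a) = 0)
    (h3 : 2*ε*c + lam*(d-a) = 0) (h4 : 2*ε*d - lam*(b+c) = 0) :
    a = 0 ∧ b = 0 ∧ c = 0 ∧ d = 0 := by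
  have hw : d = -a := by
    have h : ε*(a+d) = 0 := by linarith
    rcases mul_eq_zero.mp h with h | h
    · exact absurd h hε.ne'
    · linarith
  have hbc : b = c := by
    have h : ε*(b-c) = 0 := by linarith
    rcases mul_eq_zero.mp h with h | h
    · exact absurd h hε.ne'
    · linarith
  have ha : a = 0 := by
    have h : (ε^2 + lam^2) * a = 0 := by
      linear_combination (ε/2)*h1 - (lam/2)*h2 + (ε*lam/2)*hbc + (lam^2/2)*hw
    rcases mul_eq_zero.mp h with h | h
    · nlinarith
    · exact h
  have hb : b = 0 := by
    have h : (ε^2 + lam^2) * b = 0 := by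
      linear_combination (lam/2)*h1 + (ε/2)*h2 + (lam^2/2)*hbc - (ε*lam/2)*hw
    rcases mul_eq_zero.mp h with h | h
    · nlinarith
    · exact h
  exact ⟨ha, hb, hbc ▸ hb, by rw [hw, ha, neg_zero]⟩

/-- Let `ε > 0`, `λ ∈ ℝ`, `Λ := λ·A + ε·I`, and let `C` be any real 2×2 matrix.
Then `exp(-rΛ)·C·exp(-rΛᵀ) = e^{-2εr}·exp(-λrA)·C·exp(λrA)` for all `r ≥ 0`, the
integral `J := ∫₀^∞ exp(-rΛ)·C·exp(-rΛᵀ) dr` converges (entrywise), and `J` is the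
unique real 2×2 matrix solving the Lyapunov equation `Λ·J + J·Λᵀ = C`. -/
theorem lyapunov_integral (ε : ℝ) (hε : 0 < ε) (lam : ℝ)
    (C : Matrix (Fin 2) (Fin 2) ℝ)
    (Λ : Matrix (Fin 2) (Fin 2) ℝ)
    (hΛ : Λ = lam • matA + ε • (1 : Matrix (Fin 2) (Fin 2) ℝ)) :
    (∀ r : ℝ, 0 ≤ r →
      NormedSpace.exp (-r • Λ) * C * NormedSpace.exp (-r • Λᵀ) =
        Real.exp (-(2 * ε * r)) •
          (NormedSpace.exp (-(lam * r) • matA) * C *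
            NormedSpace.exp ((lam * r) • matA))) ∧
    (∀ i j : Fin 2,
      MeasureTheory.IntegrableOn
        (fun r : ℝ =>
          (NormedSpace.exp (-r • Λ) * C * NormedSpace.exp (-r • Λᵀ)) i j)
        (Set.Ioi (0 : ℝ))) ∧
    ∀ J : Matrix (Fin 2) (Fin 2) ℝ,
      J = Matrix.of (fun i j =>
        ∫ r in Set.Ioi (0 : ℝ),
          (NormedSpace.exp (-r • Λ) * C * NormedSpace.exp (-r • Λᵀ)) i j) →
      (Λ * J + J * Λᵀ = C ∧
        ∀ J' : Matrix (Fin 2) (Fin 2) ℝ, Λ * J' + J' * Λᵀ = C → J' = J) := by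
  have hAT : matAᵀ = -matA := by
    ext i j; fin_cases i <;> fin_cases j <;> simp [matA]
  have hT : Λᵀ = (-lam) • matA + ε • (1 : Matrix (Fin 2) (Fin 2) ℝ) := by
    rw [hΛ, transpose_add, transpose_smul, transpose_smul, transpose_one, hAT]
    module
  have hexp1 : ∀ r : ℝ, NormedSpace.exp (-r • Λ) =
      (Real.exp (-(ε*r)) * Real.cos (lam*r)) • (1 : Matrix (Fin 2) (Fin 2) ℝ) -
        (Real.exp (-(ε*r)) * Real.sin (lam*r)) • matA := by
    intro r
    have h : -r • Λ = (-(ε*r)) • (1 : Matrix (Fin 2) (Fin 2) ℝ) + (-(lam*r)) • matA := by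
      rw [hΛ]; module
    rw [h, exp_formula, Real.cos_neg, Real.sin_neg, mul_neg, neg_smul, ← sub_eq_add_neg]
  have hexp2 : ∀ r : ℝ, NormedSpace.exp (-r • Λᵀ) =
      (Real.exp (-(ε*r)) * Real.cos (lam*r)) • (1 : Matrix (Fin 2) (Fin 2) ℝ) +
        (Real.exp (-(ε*r)) * Real.sin (lam*r)) • matA := by
    intro r
    have h : -r • Λᵀ = (-(ε*r)) • (1 : Matrix (Fin 2) (Fin 2) ℝ) + (lam*r) • matA := by
      rw [hT]; module
    rw [h, exp_formula]
  have hexp3 : ∀ r : ℝ, NormedSpace.exp (-(lam*r) • matA) =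
      Real.cos (lam*r) • (1 : Matrix (Fin 2) (Fin 2) ℝ) - Real.sin (lam*r) • matA := by
    intro r
    have h : -(lam*r) • matA = (0:ℝ) • (1 : Matrix (Fin 2) (Fin 2) ℝ) + (-(lam*r)) • matA := by
      module
    rw [h, exp_formula, Real.exp_zero, Real.cos_neg, Real.sin_neg, one_mul, one_mul,
      neg_smul, ← sub_eq_add_neg]
  have hexp4 : ∀ r : ℝ, NormedSpace.exp ((lam*r) • matA) =
      Real.cos (lam*r) • (1 : Matrix (Fin 2) (Fin 2) ℝ) + Real.sin (lam*r) • matA := by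
    intro r
    have h : (lam*r) • matA = (0:ℝ) • (1 : Matrix (Fin 2) (Fin 2) ℝ) + (lam*r) • matA := by
      module
    rw [h, exp_formula, Real.exp_zero, one_mul, one_mul]
  have he2 : ∀ r : ℝ, Real.exp (-(2*ε*r)) = Real.exp (-(ε*r)) * Real.exp (-(ε*r)) := by
    intro r; rw [← Real.exp_add]; ring_nf
  have hFij : ∀ (r : ℝ) (i j : Fin 2),
      (NormedSpace.exp (-r • Λ) * C * NormedSpace.exp (-r • Λᵀ)) i j =
        lyapF ε lam (C i j) ((C * matA - matA * C) i j) ((-(matA * C * matA)) i j) r := by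
    intro r i j
    rw [hexp1 r, hexp2 r]
    fin_cases i <;> fin_cases j <;>
      simp [lyapF, Matrix.mul_apply, Fin.sum_univ_two, Matrix.add_apply, Matrix.sub_apply,
        Matrix.smul_apply, Matrix.one_apply, Matrix.neg_apply, matA, Matrix.vecMul,
        Matrix.vecHead, Matrix.vecTail, dotProduct] <;>
      rw [he2 r] <;> ring

  refine ⟨?_, ?_, ?_⟩
  · -- Part 1
    intro r _
    rw [hexp1 r, hexp2 r, hexp3 r, hexp4 r]
    ext i j
    fin_cases i <;> fin_cases j <;>
      simp [Matrix.mul_apply, Fin.sum_univ_two, Matrix.add_apply, Matrix.sub_apply,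
        Matrix.smul_apply, Matrix.one_apply, Matrix.neg_apply, matA, Matrix.vecMul,
        Matrix.vecHead, Matrix.vecTail, dotProduct] <;>
      rw [he2 r] <;> ring
  · -- Part 2
    intro i j
    have hre : (fun r : ℝ =>
        (NormedSpace.exp (-r • Λ) * C * NormedSpace.exp (-r • Λᵀ)) i j)
        = fun r => lyapF ε lam (C i j) ((C * matA - matA * C) i j)
            ((-(matA * C * matA)) i j) r := funext fun r => hFij r i j
    rw [hre]
    exact lyapF_integrable hε lam _ _ _
  · -- Part 3
    intro J hJ
    have hJint : ∀ i j : Fin 2, J i j = ∫ r in Set.Ioi (0:ℝ),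
        lyapF ε lam (C i j) ((C * matA - matA * C) i j) ((-(matA * C * matA)) i j) r := by
      intro i j
      have hre : (fun r : ℝ =>
          (NormedSpace.exp (-r • Λ) * C * NormedSpace.exp (-r • Λᵀ)) i j)
          = fun r => lyapF ε lam (C i j) ((C * matA - matA * C) i j)
              ((-(matA * C * matA)) i j) r := funext fun r => hFij r i j
      rw [hJ, Matrix.of_apply, hre]
    have hI : ∀ a b : Fin 2, IntegrableOn
        (fun r => lyapF ε lam (C a b) ((C * matA - matA * C) a b)
          ((-(matA * C * matA)) a b) r) (Set.Ioi (0:ℝ)) :=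
      fun a b => lyapF_integrable hε lam _ _ _
    have hmain : Λ * J + J * Λᵀ = C := by
      ext i j
      have hpt : ∀ r : ℝ,
          Λ i 0 * lyapF ε lam (C 0 j) ((C * matA - matA * C) 0 j) ((-(matA * C * matA)) 0 j) r
            + Λ i 1 * lyapF ε lam (C 1 j) ((C * matA - matA * C) 1 j) ((-(matA * C * matA)) 1 j) r
            + (lyapF ε lam (C i 0) ((C * matA - matA * C) i 0) ((-(matA * C * matA)) i 0) r * Λᵀ 0 j
              + lyapF ε lam (C i 1) ((C * matA - matA * C) i 1) ((-(matA * C * matA)) i 1) r * Λᵀ 1 j)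
          = -(lyapF ε lam
                (lam * ((C * matA - matA * C) i j) - 2*ε*(C i j))
                (2*lam*(((-(matA * C * matA)) i j) - C i j) - 2*ε*((C * matA - matA * C) i j))
                (-(lam * ((C * matA - matA * C) i j)) - 2*ε*((-(matA * C * matA)) i j)) r) := by
        intro r
        fin_cases i <;> fin_cases j <;>
          simp [lyapF, hΛ, matA, Matrix.mul_apply, Fin.sum_univ_two, Matrix.add_apply,
            Matrix.sub_apply, Matrix.neg_apply, Matrix.smul_apply, Matrix.one_apply,
            Matrix.transpose_apply, Matrix.vecMul, Matrix.vecHead, Matrix.vecTail,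
            dotProduct] <;> ring
      have I1 : IntegrableOn (fun r : ℝ => Λ i 0 * lyapF ε lam (C 0 j) ((C * matA - matA * C) 0 j) ((-(matA * C * matA)) 0 j) r) (Set.Ioi (0:ℝ)) := (hI 0 j).const_mul _
      have I2 : IntegrableOn (fun r : ℝ => Λ i 1 * lyapF ε lam (C 1 j) ((C * matA - matA * C) 1 j) ((-(matA * C * matA)) 1 j) r) (Set.Ioi (0:ℝ)) := (hI 1 j).const_mul _
      have I3 : IntegrableOn (fun r : ℝ => lyapF ε lam (C i 0) ((C * matA - matA * C) i 0) ((-(matA * C * matA)) i 0) r * Λᵀ 0 j) (Set.Ioi (0:ℝ)) := (hI i 0).mul_const _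
      have I4 : IntegrableOn (fun r : ℝ => lyapF ε lam (C i 1) ((C * matA - matA * C) i 1) ((-(matA * C * matA)) i 1) r * Λᵀ 1 j) (Set.Ioi (0:ℝ)) := (hI i 1).mul_const _
      have I12 : IntegrableOn (fun r : ℝ => Λ i 0 * lyapF ε lam (C 0 j) ((C * matA - matA * C) 0 j) ((-(matA * C * matA)) 0 j) r + Λ i 1 * lyapF ε lam (C 1 j) ((C * matA - matA * C) 1 j) ((-(matA * C * matA)) 1 j) r) (Set.Ioi (0:ℝ)) := I1.add I2
      have I34 : IntegrableOn (fun r : ℝ => lyapF ε lam (C i 0) ((C * matA - matA * C) i 0) ((-(matA * C * matA)) i 0) r * Λᵀ 0 j + lyapF ε lam (C i 1) ((C * matA - matA * C) i 1) ((-(matA * C * matA)) i 1) r * Λᵀ 1 j) (Set.Ioi (0:ℝ)) := I3.add I4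
      calc (Λ * J + J * Λᵀ) i j
          = Λ i 0 * J 0 j + Λ i 1 * J 1 j + (J i 0 * Λᵀ 0 j + J i 1 * Λᵀ 1 j) := by
            rw [Matrix.add_apply, Matrix.mul_apply, Matrix.mul_apply, Fin.sum_univ_two,
              Fin.sum_univ_two]
        _ = (∫ r in Set.Ioi (0:ℝ), Λ i 0 * lyapF ε lam (C 0 j) ((C * matA - matA * C) 0 j) ((-(matA * C * matA)) 0 j) r) + (∫ r in Set.Ioi (0:ℝ), Λ i 1 * lyapF ε lam (C 1 j) ((C * matA - matA * C) 1 j) ((-(matA * C * matA)) 1 j) r)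
            + ((∫ r in Set.Ioi (0:ℝ), lyapF ε lam (C i 0) ((C * matA - matA * C) i 0) ((-(matA * C * matA)) i 0) r * Λᵀ 0 j) + (∫ r in Set.Ioi (0:ℝ), lyapF ε lam (C i 1) ((C * matA - matA * C) i 1) ((-(matA * C * matA)) i 1) r * Λᵀ 1 j)) := by
            rw [hJint 0 j, hJint 1 j, hJint i 0, hJint i 1,
              ← MeasureTheory.integral_const_mul, ← MeasureTheory.integral_const_mul,
              ← MeasureTheory.integral_mul_const, ← MeasureTheory.integral_mul_const]
        _ = ∫ r in Set.Ioi (0:ℝ), (Λ i 0 * lyapF ε lam (C 0 j) ((C * matA - matA * C) 0 j) ((-(matA * C * matA)) 0 j) r + Λ i 1 * lyapF ε lam (C 1 j) ((C * matA - matA * C) 1 j) ((-(matA * C * matA)) 1 j) r + (lyapF ε lam (C i 0) ((C * matA - matA * C) i 0) ((-(matA * C * matA)) i 0) r * Λᵀ 0 j + lyapF ε lam (C i 1) ((C * matA - matA * C) i 1) ((-(matA * C * matA)) i 1) r * Λᵀ 1 j)) := by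
            rw [← MeasureTheory.integral_add I1 I2, ← MeasureTheory.integral_add I3 I4,
              ← MeasureTheory.integral_add I12 I34]
        _ = C i j := by
            rw [MeasureTheory.setIntegral_congr_fun measurableSet_Ioi (fun r _ => hpt r),
              MeasureTheory.integral_neg, lyapF_integral_deriv hε, neg_neg]
    refine ⟨hmain, ?_⟩
    intro J' hJ'
    have h0 : Λ * (J' - J) + (J' - J) * Λᵀ = 0 := by
      calc Λ * (J' - J) + (J' - J) * Λᵀ
          = (Λ * J' + J' * Λᵀ) - (Λ * J + J * Λᵀ) := by
            rw [Matrix.mul_sub, Matrix.sub_mul]; abel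
        _ = C - C := by rw [hJ', hmain]
        _ = 0 := sub_self C
    have e00 := congrFun (congrFun h0 0) 0
    have e01 := congrFun (congrFun h0 0) 1
    have e10 := congrFun (congrFun h0 1) 0
    have e11 := congrFun (congrFun h0 1) 1
    simp [Matrix.add_apply, Matrix.mul_apply, Fin.sum_univ_two, Matrix.sub_apply,
      Matrix.zero_apply, hΛ, hT, Matrix.smul_apply, Matrix.one_apply, Matrix.transpose_apply,
      matA, Matrix.vecMul, Matrix.vecHead, Matrix.vecTail,
      dotProduct] at e00 e01 e10 e11
    obtain ⟨ha, hb, hc, hd⟩ := lyap_uniq hε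
      (show 2*ε*(J' 0 0 - J 0 0) + lam*((J' 0 1 - J 0 1) + (J' 1 0 - J 1 0)) = 0 by
        linear_combination e00)
      (show 2*ε*(J' 0 1 - J 0 1) + lam*((J' 1 1 - J 1 1) - (J' 0 0 - J 0 0)) = 0 by
        linear_combination e01)
      (show 2*ε*(J' 1 0 - J 1 0) + lam*((J' 1 1 - J 1 1) - (J' 0 0 - J 0 0)) = 0 by
        linear_combination e10)
      (show 2*ε*(J' 1 1 - J 1 1) - lam*((J' 0 1 - J 0 1) + (J' 1 0 - J 1 0)) = 0 by
        linear_combination e11)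
    ext i j
    fin_cases i <;> fin_cases j
    · exact sub_eq_zero.mp ha
    · exact sub_eq_zero.mp hb
    · exact sub_eq_zero.mp hc
    · exact sub_eq_zero.mp hd
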